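/- Let p ≠ 2 be a prime and G a cyclic group of order 3. The group ring ℤ₍ₚ₎G, where ℤ₍ₚ₎ = {m/n ∈ ℚ : gcd(p,n) = 1} is the localization of ℤ at p, is 2-strongly clean: every element is a sum of an idempotent and two units. -/

import Mathlib

open MonoidAlgebra

/-- Shorthand for elements of the cyclic group of order 3. -/
noncomputable def ggen (n : ZMod 3) : Multiplicative (ZMod 3) := Multiplicative.ofAdd n

section CirculantLemmas

variable {R : Type*} [CommRing R]

/-- Multiplication formula in the group algebra of `C₃` in terms of coordinates. -/
theorem mul3 (a b c d f h : R) :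
    (single (1 : Multiplicative (ZMod 3)) a + single (ggen 1) b + single (ggen 2) c) *
      (single (1 : Multiplicative (ZMod 3)) d + single (ggen 1) f + single (ggen 2) h)
    = single (1 : Multiplicative (ZMod 3)) (a*d + b*h + c*f)
      + single (ggen 1) (a*f + b*d + c*h)
      + single (ggen 2) (a*h + b*f + c*d) := by
  have e1 : (ggen 1) * (ggen 1) = ggen 2 := by decide
  have e2 : (ggen 1) * (ggen 2) = 1 := by decide
  have e3 : (ggen 2) * (ggen 1) = 1 := by decide
  have e4 : (ggen 2) * (ggen 2) = ggen 1 := by decide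
  simp only [add_mul, mul_add, single_mul_single, one_mul, mul_one, e1, e2, e3, e4,
    MonoidAlgebra.single_add]
  abel

/-- Every element of the group algebra of `C₃` is determined by its three coordinates. -/
theorem decomp3 (x : MonoidAlgebra R (Multiplicative (ZMod 3))) :
    x = single (1 : Multiplicative (ZMod 3)) (x.coeff 1) + single (ggen 1) (x.coeff (ggen 1))
      + single (ggen 2) (x.coeff (ggen 2)) := by
  have trich : ∀ k : Multiplicative (ZMod 3), k = 1 ∨ k = ggen 1 ∨ k = ggen 2 := by decide
  apply MonoidAlgebra.ext; apply Finsupp.ext; intro k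
  show _ = (single (1 : Multiplicative (ZMod 3)) (x.coeff 1) + single (ggen 1) (x.coeff (ggen 1))
      + single (ggen 2) (x.coeff (ggen 2))).coeff k
  rcases trich k with rfl | rfl | rfl <;>
    rw [coeff_add, coeff_add, coeff_single, coeff_single, coeff_single,
      Finsupp.add_apply, Finsupp.add_apply] <;>
    rw [Finsupp.single_apply, Finsupp.single_apply, Finsupp.single_apply] <;>
    norm_num <;>
    first
      | rfl
      | (rw [if_neg (by decide), if_neg (by decide)]; ring)

/-- An element of the group algebra of `C₃` whose circulant norm is a unit is a unit. -/
theorem isUnit_triple (α β γ : R) (hN : IsUnit (α^3 + β^3 + γ^3 - 3*α*β*γ)) :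
    IsUnit (single (1 : Multiplicative (ZMod 3)) α + single (ggen 1) β + single (ggen 2) γ) := by
  obtain ⟨n, hn⟩ := hN
  refine IsUnit.of_mul_eq_one
    (single (1 : Multiplicative (ZMod 3)) ((↑n⁻¹ : R) * (α^2 - β*γ))
      + single (ggen 1) ((↑n⁻¹ : R) * (γ^2 - α*β))
      + single (ggen 2) ((↑n⁻¹ : R) * (β^2 - α*γ))) ?_
  rw [mul3]
  have h1 : α*((↑n⁻¹ : R)*(α^2 - β*γ)) + β*((↑n⁻¹ : R)*(β^2 - α*γ))
      + γ*((↑n⁻¹ : R)*(γ^2 - α*β)) = 1 := by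
    have hinv : (↑n⁻¹ : R) * (↑n : R) = 1 := Units.inv_mul n
    rw [hn] at hinv
    linear_combination hinv
  have h2 : α*((↑n⁻¹ : R)*(γ^2 - α*β)) + β*((↑n⁻¹ : R)*(α^2 - β*γ))
      + γ*((↑n⁻¹ : R)*(β^2 - α*γ)) = 0 := by ring
  have h3 : α*((↑n⁻¹ : R)*(β^2 - α*γ)) + β*((↑n⁻¹ : R)*(γ^2 - α*β))
      + γ*((↑n⁻¹ : R)*(α^2 - β*γ)) = 0 := by ring
  rw [h1, h2, h3]
  simp [MonoidAlgebra.one_def]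

end CirculantLemmas

theorem field_step {k : Type*} [Field k] (p : ℕ) (hp : Nat.Prime p) (hp2 : p ≠ 2)
    (hchar : (p : k) = 0) (A B C : k) :
    ∃ t : ℕ, (t : k) ≠ 0 ∧
      (A - t)^3 + B^3 + C^3 - 3*(A - t)*B*C ≠ 0 := by
  haveI : CharP k p := (CharP.charP_iff_prime_eq_zero hp).2 hchar
  by_cases h3 : p = 3
  · subst h3
    haveI : Fact (Nat.Prime 3) := ⟨by norm_num⟩
    have c3 : (3 : k) = 0 := by exact_mod_cast hchar
    have cube : ∀ u v : k, (u + v)^3 = u^3 + v^3 := fun u v => add_pow_char (p := 3) u v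
    have key : ∀ t : k, (A - t)^3 + B^3 + C^3 - 3*(A - t)*B*C = (A + B + C - t)^3 := by
      intro t
      have h1 : (A - t) + B = A + B - t := by ring
      have h2 : (A + B - t) + C = A + B + C - t := by ring
      rw [← cube, h1, ← cube, h2]
      linear_combination (-(A-t)*B*C)*c3
    by_cases hs : A + B + C = 1
    · refine ⟨2, ?_, ?_⟩
      · intro h
        have := (CharP.cast_eq_zero_iff k 3 2).1 h
        omega
      · rw [key, hs]
        intro h
        have h0 := pow_eq_zero_iff (n := 3) (by norm_num) |>.1 h
        push_cast at h0
        exact one_ne_zero (by linear_combination -h0 : (1:k) = 0)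
    · exact ⟨1, by simpa using one_ne_zero, by
        rw [key]
        push_cast
        exact pow_ne_zero _ (sub_ne_zero.2 hs)⟩
  · have h2 := hp.two_le
    have h4 : p ≠ 4 := by rintro rfl; norm_num at hp
    have hp5 : 5 ≤ p := by omega
    have hne : ∀ t : ℕ, 0 < t → t < 5 → (t : k) ≠ 0 := by
      intro t ht1 ht2 h
      have hdvd := (CharP.cast_eq_zero_iff k p t).1 h
      have := Nat.le_of_dvd ht1 hdvd
      omega
    by_contra hcon
    push_neg at hcon
    have e1 := hcon 1 (hne 1 (by norm_num) (by norm_num))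
    have e2 := hcon 2 (hne 2 (by norm_num) (by norm_num))
    have e3 := hcon 3 (hne 3 (by norm_num) (by norm_num))
    have e4 := hcon 4 (hne 4 (by norm_num) (by norm_num))
    push_cast at e1 e2 e3 e4
    have h6 : (6 : k) = 0 := by linear_combination e1 - 3*e2 + 3*e3 - e4
    have hd := (CharP.cast_eq_zero_iff k p 6).1 h6
    have hle := Nat.le_of_dvd (by norm_num) hd
    interval_cases p
    · exact absurd hd (by norm_num)
    · exact absurd hp (by norm_num)

instance intSpanPrime (p : ℕ) [hp : Fact p.Prime] :
    (Ideal.span {(p : ℤ)} : Ideal ℤ).IsPrime := by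
  rw [Ideal.span_singleton_prime (by exact_mod_cast hp.out.ne_zero)]
  exact Nat.prime_iff_prime_int.mp hp.out

theorem zp_c3_two_strongly_clean (p : ℕ) [Fact p.Prime] (hp2 : p ≠ 2)
    (x : MonoidAlgebra (Localization.AtPrime (Ideal.span {(p : ℤ)}))
      (Multiplicative (ZMod 3))) :
    ∃ (e : MonoidAlgebra (Localization.AtPrime (Ideal.span {(p : ℤ)}))
        (Multiplicative (ZMod 3)))
      (u₁ u₂ : (MonoidAlgebra (Localization.AtPrime (Ideal.span {(p : ℤ)}))
        (Multiplicative (ZMod 3)))ˣ),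
      IsIdempotentElem e ∧ x = e + u₁ + u₂ := by
  set R := Localization.AtPrime (Ideal.span {(p : ℤ)}) with hR
  set a : R := x.coeff 1 with ha
  set b : R := x.coeff (ggen 1) with hb
  set c : R := x.coeff (ggen 2) with hc
  -- residue field
  set k := IsLocalRing.ResidueField R with hk
  set π : R →+* k := IsLocalRing.residue R with hπ
  -- characteristic of the residue field is p
  have hpmem : ((p : ℕ) : R) ∈ IsLocalRing.maximalIdeal R := by
    rw [← map_natCast (algebraMap ℤ R) p, ← Localization.AtPrime.map_eq_maximalIdeal]
    exact Ideal.mem_map_of_mem _ (Ideal.mem_span_singleton_self _)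
  have hchar : (p : k) = 0 := by
    rw [← map_natCast π p]
    exact Ideal.Quotient.eq_zero_iff_mem.2 hpmem
  -- pick the scalar shift t
  obtain ⟨t, ht0, htN⟩ := field_step p (Fact.out) hp2 hchar (π a) (π b) (π c)
  -- units from residue conditions
  have hunit : ∀ r : R, π r ≠ 0 → IsUnit r := fun r hr =>
    (IsLocalRing.residue_ne_zero_iff_isUnit r).1 hr
  have htR : IsUnit ((t : R)) := hunit _ (by rwa [map_natCast])
  -- u₂ : the scalar t
  have hu2 : IsUnit (single (1 : Multiplicative (ZMod 3)) ((t : R))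
      + single (ggen 1) (0:R) + single (ggen 2) (0:R)) := by
    apply isUnit_triple
    have : (t:R)^3 + 0^3 + 0^3 - 3*(t:R)*0*0 = (t:R)^3 := by ring
    rw [this]
    exact htR.pow 3
  -- u₁ : x - t
  have hu1 : IsUnit (single (1 : Multiplicative (ZMod 3)) (a - (t : R))
      + single (ggen 1) b + single (ggen 2) c) := by
    apply isUnit_triple
    apply hunit
    intro h0
    apply htN
    simp only [map_sub, map_add, map_pow, map_mul, map_natCast, map_ofNat] at h0
    exact h0
  refine ⟨0, hu1.unit, hu2.unit, IsIdempotentElem.zero, ?_⟩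
  rw [zero_add, IsUnit.unit_spec, IsUnit.unit_spec]
  rw [decomp3 x]
  simp only [← ha, ← hb, ← hc]
  have hsplit : single (1 : Multiplicative (ZMod 3)) a
      = single (1 : Multiplicative (ZMod 3)) (a - (t : R))
        + single (1 : Multiplicative (ZMod 3)) ((t : R)) := by
    rw [← MonoidAlgebra.single_add]
    norm_num
  rw [hsplit]
  simp only [MonoidAlgebra.single_zero]
  abel
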